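/- Let {T_α}_{α∈I} be a dilation family on (X,d,x₀) with I a pure set. Then for every x ∈ X, the map T^x : I → X defined by α ↦ T_α(x) is continuous, and is uniformly continuous on [a,b] ∩ I for any 0 < a ≤ b. -/

import Mathlib

open Filter Topology Set

/-- A dilation family on `(X, d, x₀)` indexed by a multiplicatively closed
set `I ⊆ ℝ≥0`. -/
def IsDilationFamily {X : Type*} [MetricSpace X] (I : Set ℝ) (T : ℝ → X → X) (x₀ : X) : Prop :=
  I ⊆ Set.Ici 0 ∧
  (∀ α ∈ I, ∀ β ∈ I, α * β ∈ I) ∧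
  (∀ α ∈ I, ∀ x y : X, dist (T α x) (T α y) = α * dist x y) ∧
  (∀ α ∈ I, T α x₀ = x₀) ∧
  (∀ α ∈ I, ∀ β ∈ I, ∀ x : X, T α (T β x) = T (α * β) x) ∧
  (∀ x : X, ∃ L : X, Tendsto (fun α => T α x) (𝓝[I] 1) (𝓝 L))

/-- A pure set: a subset of `ℝ≥0` containing `1`, closed under multiplication, and
closed under the appropriate divisions. -/
def IsPureSet (I : Set ℝ) : Prop :=
  I ⊆ Set.Ici 0 ∧ (1 : ℝ) ∈ I ∧ (∀ α ∈ I, ∀ β ∈ I, α * β ∈ I) ∧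
  ((I ⊆ Set.Ici 1 ∧ ∀ α ∈ I, ∀ β ∈ I, α < β → β / α ∈ I) ∨
   (I ⊆ Set.Icc 0 1 ∧ ∀ α ∈ I, ∀ β ∈ I, α < β → α / β ∈ I) ∨
   (∀ α ∈ I, ∀ β ∈ I, β ≠ 0 → α / β ∈ I))

/-- For a dilation family over a pure set `I`, the map `α ↦ T_α(x)` is continuous on `I`
and uniformly continuous on `[a,b] ∩ I` for `0 < a ≤ b`. -/
theorem stmt_3 {X : Type*} [MetricSpace X] (I : Set ℝ) (T : ℝ → X → X) (x₀ : X)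
    (hI : IsPureSet I) (hT : IsDilationFamily I T x₀) :
    ∀ x : X, ContinuousOn (fun α => T α x) I ∧
      ∀ a b : ℝ, 0 < a → a ≤ b → ∀ ε > (0 : ℝ), ∃ δ > (0 : ℝ),
        ∀ α ∈ Set.Icc a b ∩ I, ∀ β ∈ Set.Icc a b ∩ I,
          |α - β| < δ → dist (T α x) (T β x) < ε := by
  obtain ⟨hI0, h1I, hmul, hcases⟩ := hI
  obtain ⟨_, _, hdist, hfix, hcomp, hlim⟩ := hT
  -- T 1 is the identity
  have hT1 : ∀ x : X, T 1 x = x := by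
    intro x
    have h := hcomp 1 h1I 1 h1I x
    have hd := hdist 1 h1I x (T 1 x)
    rw [one_mul] at h hd
    rw [h, dist_self] at hd
    exact (dist_eq_zero.mp hd.symm).symm
  -- Key convergence: T γ y → y as γ → 1 within I
  have hA : ∀ y : X, Tendsto (fun γ => T γ y) (𝓝[I] 1) (𝓝 y) := by
    intro y
    obtain ⟨L, hL⟩ := hlim y
    rw [tendsto_iff_dist_tendsto_zero]
    have hsq : Tendsto (fun γ : ℝ => γ * γ) (𝓝[I] 1) (𝓝[I] 1) := by
      apply tendsto_nhdsWithin_of_tendsto_nhds_of_eventually_within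
      · have h : Tendsto (fun γ : ℝ => γ * γ) (𝓝 (1:ℝ)) (𝓝 (1:ℝ)) := by
          have := (continuous_id.mul continuous_id).tendsto (1 : ℝ)
          simpa [Pi.mul_def] using this
        exact h.mono_left nhdsWithin_le_nhds
      · filter_upwards [self_mem_nhdsWithin] with γ hγ
        exact hmul γ hγ γ hγ
    have h2 : Tendsto (fun γ => dist (T γ y) (T (γ * γ) y)) (𝓝[I] 1) (𝓝 0) := by
      have := hL.dist (hL.comp hsq)
      simpa using this
    have h3 : Tendsto (fun γ => γ * dist y (T γ y)) (𝓝[I] 1) (𝓝 0) := by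
      apply h2.congr'
      filter_upwards [self_mem_nhdsWithin] with γ hγ
      rw [← hcomp γ hγ γ hγ y, hdist γ hγ]
    have hinv : Tendsto (fun γ : ℝ => γ⁻¹) (𝓝[I] 1) (𝓝 1) := by
      have h : Tendsto (fun γ : ℝ => γ⁻¹) (𝓝 (1:ℝ)) (𝓝 ((1:ℝ)⁻¹)) :=
        (continuousAt_inv₀ one_ne_zero).tendsto
      simpa using h.mono_left nhdsWithin_le_nhds
    have h4 : Tendsto (fun γ : ℝ => γ⁻¹ * (γ * dist y (T γ y))) (𝓝[I] 1) (𝓝 0) := by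
      simpa using hinv.mul h3
    apply h4.congr'
    have hne : ∀ᶠ γ : ℝ in 𝓝[I] 1, γ ≠ 0 :=
      eventually_nhdsWithin_of_eventually_nhds (eventually_ne_nhds one_ne_zero)
    filter_upwards [hne] with γ hγ
    rw [← mul_assoc, inv_mul_cancel₀ hγ, one_mul, dist_comm]
  -- Key estimate
  have hB : ∀ x : X, ∀ α ∈ I, ∀ β ∈ I, 0 < α → α ≤ β →
      ∃ ρ ∈ I, dist (T α x) (T β x) ≤ β * dist (T ρ x) x ∧ |ρ - 1| ≤ (β - α) / α := by
    intro x α hα β hβ hα0 hαβ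
    rcases eq_or_lt_of_le hαβ with heq | hlt
    · refine ⟨1, h1I, ?_, ?_⟩
      · simp [← heq, hT1 x]
      · simp [← heq]
    · have hβ0 : 0 < β := hα0.trans hlt
      have hcase13 : β / α ∈ I → ∃ ρ ∈ I, dist (T α x) (T β x) ≤ β * dist (T ρ x) x ∧
          |ρ - 1| ≤ (β - α) / α := by
        intro hρ
        refine ⟨β / α, hρ, ?_, ?_⟩
        · have hc : T α (T (β / α) x) = T β x := by
            rw [hcomp α hα (β / α) hρ x, mul_div_cancel₀ β (ne_of_gt hα0)]
          calc dist (T α x) (T β x) = dist (T α x) (T α (T (β / α) x)) := by rw [hc]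
            _ = α * dist x (T (β / α) x) := hdist α hα x _
            _ = α * dist (T (β / α) x) x := by rw [dist_comm]
            _ ≤ β * dist (T (β / α) x) x :=
                mul_le_mul_of_nonneg_right hαβ dist_nonneg
        · have h' : β / α - 1 = (β - α) / α := by field_simp
          rw [h', abs_of_nonneg (div_nonneg (by linarith) hα0.le)]
      rcases hcases with ⟨_, hdiv⟩ | ⟨_, hdiv⟩ | hdiv
      · exact hcase13 (hdiv α hα β hβ hlt)
      · refine ⟨α / β, hdiv α hα β hβ hlt, ?_, ?_⟩
        · have hc : T β (T (α / β) x) = T α x := by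
            rw [hcomp β hβ (α / β) (hdiv α hα β hβ hlt) x, mul_div_cancel₀ α (ne_of_gt hβ0)]
          exact le_of_eq (by rw [← hc, hdist β hβ])
        · have h1 : α / β - 1 = -((β - α) / β) := by field_simp; ring
          rw [h1, abs_neg, abs_of_nonneg (div_nonneg (by linarith) hβ0.le)]
          exact div_le_div_of_nonneg_left (by linarith) hα0 hαβ
      · exact hcase13 (hdiv β hβ α hα (ne_of_gt hα0))
  -- Uniform continuity statement
  have hU : ∀ x : X, ∀ a b : ℝ, 0 < a → a ≤ b → ∀ ε > (0 : ℝ), ∃ δ > (0 : ℝ),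
      ∀ α ∈ Set.Icc a b ∩ I, ∀ β ∈ Set.Icc a b ∩ I,
        |α - β| < δ → dist (T α x) (T β x) < ε := by
    intro x a b ha hab ε hε
    have hb : 0 < b := ha.trans_le hab
    have hε' : 0 < ε / (b + 1) := by positivity
    obtain ⟨η, hη, hball⟩ := Metric.tendsto_nhdsWithin_nhds.mp (hA x) (ε / (b + 1)) hε'
    refine ⟨a * η, by positivity, ?_⟩
    have key : ∀ α ∈ Set.Icc a b ∩ I, ∀ β ∈ Set.Icc a b ∩ I, α ≤ β → |α - β| < a * η →
        dist (T α x) (T β x) < ε := by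
      rintro α ⟨hαab, hαI⟩ β ⟨hβab, hβI⟩ hle hd
      have hα0 : 0 < α := ha.trans_le hαab.1
      obtain ⟨ρ, hρI, hbound, hρ1⟩ := hB x α hαI β hβI hα0 hle
      have habs : |α - β| = β - α := by rw [abs_sub_comm]; exact abs_of_nonneg (by linarith)
      have hρη : dist ρ 1 < η := by
        rw [Real.dist_eq]
        calc |ρ - 1| ≤ (β - α) / α := hρ1
          _ ≤ (β - α) / a := div_le_div_of_nonneg_left (by linarith) ha hαab.1
          _ < η := by rw [div_lt_iff₀ ha]; rw [habs] at hd; linarith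
      have hdd := hball hρI hρη
      calc dist (T α x) (T β x) ≤ β * dist (T ρ x) x := hbound
        _ ≤ b * dist (T ρ x) x := mul_le_mul_of_nonneg_right hβab.2 dist_nonneg
        _ < b * (ε / (b + 1)) := by exact mul_lt_mul_of_pos_left hdd hb
        _ < ε := by rw [mul_div_assoc']; rw [div_lt_iff₀ (by positivity)]; nlinarith
    intro α hα β hβ hd
    rcases le_total α β with h | h
    · exact key α hα β hβ h hd
    · rw [dist_comm]
      exact key β hβ α hα h (by rwa [abs_sub_comm])
  intro x
  refine ⟨?_, fun a b ha hab => hU x a b ha hab⟩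
  intro β hβ
  have hβ0 : (0:ℝ) ≤ β := hI0 hβ
  rcases eq_or_lt_of_le hβ0 with h0 | h0
  · -- β = 0
    have hx0 : T β x = x₀ := by
      have h1 : dist (T β x) (T β x₀) = β * dist x x₀ := hdist β hβ x x₀
      rw [hfix β hβ] at h1
      have h2 : β * dist x x₀ = 0 := by rw [← h0, zero_mul]
      rw [h2] at h1
      exact dist_eq_zero.mp h1
    rw [Metric.continuousWithinAt_iff]
    intro ε hε
    refine ⟨ε / (dist x x₀ + 1), by positivity, ?_⟩
    intro α hα hαd
    have hα0 : (0:ℝ) ≤ α := hI0 hα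
    have hαβ : α < ε / (dist x x₀ + 1) := by
      rw [Real.dist_eq, ← h0, sub_zero, abs_of_nonneg hα0] at hαd
      exact hαd
    have h1 : dist (T α x) (T β x) = α * dist x x₀ := by
      calc dist (T α x) (T β x) = dist (T α x) (T α x₀) := by rw [hx0, hfix α hα]
        _ = α * dist x x₀ := hdist α hα x x₀
    rw [h1]
    calc α * dist x x₀ ≤ α * (dist x x₀ + 1) := by nlinarith [dist_nonneg (x := x) (y := x₀)]
      _ < (ε / (dist x x₀ + 1)) * (dist x x₀ + 1) := by
          apply mul_lt_mul_of_pos_right hαβ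
          positivity
      _ = ε := by field_simp
  · -- β > 0
    rw [Metric.continuousWithinAt_iff]
    intro ε hε
    obtain ⟨δ, hδ, hkey⟩ := hU x (β / 2) (β + 1) (by positivity) (by linarith) ε hε
    refine ⟨min δ (min (β / 2) 1), by positivity, ?_⟩
    intro α hαI hαd
    rw [Real.dist_eq] at hαd
    have h1 : |α - β| < δ := lt_of_lt_of_le hαd (min_le_left _ _)
    have h2 : |α - β| < β / 2 := lt_of_lt_of_le hαd (le_trans (min_le_right _ _) (min_le_left _ _))
    have h3 : |α - β| < 1 := lt_of_lt_of_le hαd (le_trans (min_le_right _ _) (min_le_right _ _))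
    rw [abs_lt] at h2 h3
    exact hkey α ⟨⟨by linarith, by linarith⟩, hαI⟩ β ⟨⟨by linarith, by linarith⟩, hβ⟩ h1
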